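/- Let t : E → F be essentially defined with D(t*) essential (so t is orthogonally closable). Then: (a) t ⊆ t**, t* = t***, and Graph(t)^⊥⊥ = Graph(t**); (b) t = t** if and only if t is orthogonally closed; (c) Null(t**) is orthogonally closed; (d) if Range(t) and Range(t*) are essential submodules, then t and t** are injective, t^{-1} (with domain Range(t)) is essentially defined and orthogonally closable, and (t**)^{-1} = (t^{-1})**. -/

import Mathlib

open scoped RightActions Pointwise

noncomputable section

namespace CStarReg

variable (A : Type*)

/-- The orthogonal complement of a subset of a Hilbert C*-module with respect to the
`A`-valued inner product. -/
def ortho {E : Type*} [Zero A] [Inner A E] (S : Set E) : Set E :=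
  {x | ∀ y ∈ S, (inner A x y : A) = 0}

/-- A subset of a Hilbert C*-module is *essential* if its orthogonal complement is trivial. -/
def IsEssential {E : Type*} [Zero A] [Zero E] [Inner A E] (S : Set E) : Prop :=
  ortho A S = {0}

/-- A subset is *orthogonally closed* if it coincides with its double orthogonal complement. -/
def IsOrthoClosedSet {E : Type*} [Zero A] [Inner A E] (S : Set E) : Prop :=
  ortho A (ortho A S) = S

/-- The `A`-valued inner product on the direct sum `E ⊕ F` of two Hilbert C*-modules. -/
instance prodInner {E F : Type*} [Add A] [Inner A E] [Inner A F] : Inner A (E × F) :=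
  ⟨fun p q => (inner A p.1 q.1 : A) + (inner A p.2 q.2 : A)⟩

/-- A (not necessarily densely or essentially defined) `ℂ`-linear and `A`-linear operator
from `E` to `F`, encoded by its graph. -/
structure Unbounded (E F : Type*) [AddCommGroup E] [AddCommGroup F]
    [Module ℂ E] [Module ℂ F] [SMul Aᵐᵒᵖ E] [SMul Aᵐᵒᵖ F] where
  graph : Set (E × F)
  zero_mem : ((0 : E), (0 : F)) ∈ graph
  add_mem : ∀ ⦃p q : E × F⦄, p ∈ graph → q ∈ graph → p + q ∈ graph
  smul_mem : ∀ (c : ℂ) ⦃p : E × F⦄, p ∈ graph → c • p ∈ graph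
  smulA_mem : ∀ (a : A) ⦃p : E × F⦄, p ∈ graph → (p.1 <• a, p.2 <• a) ∈ graph
  single_valued : ∀ ⦃y : F⦄, ((0 : E), y) ∈ graph → y = 0

/-- An adjointable (everywhere defined, with everywhere defined adjoint) operator between
Hilbert C*-modules. -/
structure Adjointable (E F : Type*) [Inner A E] [Inner A F] where
  toFun : E → F
  adjFun : F → E
  adjoint_eq : ∀ (x : E) (y : F), (inner A (toFun x) y : A) = inner A x (adjFun y)

section Operators

variable {A}
variable {E F G H : Type*} [AddCommGroup E] [AddCommGroup F] [AddCommGroup G] [AddCommGroup H]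
  [Module ℂ E] [Module ℂ F] [Module ℂ G] [Module ℂ H]
  [SMul Aᵐᵒᵖ E] [SMul Aᵐᵒᵖ F] [SMul Aᵐᵒᵖ G] [SMul Aᵐᵒᵖ H]

namespace Unbounded

/-- The domain of an operator. -/
def dom (t : Unbounded A E F) : Set E := Prod.fst '' t.graph

/-- The range of an operator. -/
def ran (t : Unbounded A E F) : Set F := Prod.snd '' t.graph

/-- The null space of an operator. -/
def ker (t : Unbounded A E F) : Set E := {x | (x, (0 : F)) ∈ t.graph}

/-- `t ⊆ s`, i.e. `s` extends `t`. -/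
def le (t s : Unbounded A E F) : Prop := t.graph ⊆ s.graph

end Unbounded

variable (A)

section WithInner

variable [Inner A E] [Inner A F] [Inner A G] [Inner A H] [Add A]

/-- The graph of the adjoint: `(y, z)` belongs to `adjSet A g` iff
`⟪t x, y⟫ = ⟪x, z⟫` for all `(x, t x) ∈ g`. -/
def adjSet (g : Set (E × F)) : Set (F × E) :=
  {q | ∀ p ∈ g, (inner A p.2 q.1 : A) = inner A p.1 q.2}

end WithInner

/-- Composition of graphs. -/
def compSet (g₂ : Set (F × G)) (g₁ : Set (E × F)) : Set (E × G) :=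
  {p | ∃ y, (p.1, y) ∈ g₁ ∧ (y, p.2) ∈ g₂}

/-- The graph of `1 + s` where `g` is the graph of `s`. -/
def oneAddSet (g : Set (E × E)) : Set (E × E) :=
  {p | ∃ y, (p.1, y) ∈ g ∧ p.2 = p.1 + y}

variable {A}

namespace Unbounded

variable [Inner A E] [Inner A F] [Add A] [Zero A]

/-- The graph of the adjoint operator `t*`. -/
def adjGraph (t : Unbounded A E F) : Set (F × E) := adjSet A t.graph

/-- The domain of the adjoint operator `t*`. -/
def adjDom (t : Unbounded A E F) : Set F := Prod.fst '' (adjSet A t.graph)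

/-- `s` is the adjoint of `t`. -/
def IsAdjointOf (s : Unbounded A F E) (t : Unbounded A E F) : Prop :=
  s.graph = adjSet A t.graph

/-- `t` is essentially defined, i.e. its domain has trivial orthogonal complement. -/
def EssentiallyDefined (t : Unbounded A E F) : Prop := IsEssential A t.dom

/-- `t` is orthogonally closed, i.e. its graph coincides with its double orthogonal
complement in `E ⊕ F`. -/
def OrthoClosed (t : Unbounded A E F) : Prop := ortho A (ortho A t.graph) = t.graph

/-- `t` is graph regular: essentially defined, orthogonally closed, and its graph is
orthogonally complemented in `E ⊕ F`. -/
def GraphRegular (t : Unbounded A E F) : Prop :=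
  t.EssentiallyDefined ∧ t.OrthoClosed ∧ t.graph + ortho A t.graph = Set.univ

/-- The graph of `t* t`. -/
def adjCompGraph (t : Unbounded A E F) : Set (E × E) := compSet (adjSet A t.graph) t.graph

/-- The graph of `t t*`. -/
def compAdjGraph (t : Unbounded A E F) : Set (F × F) := compSet t.graph (adjSet A t.graph)

/-- `a = (1 + t* t)⁻¹` as an everywhere defined map. -/
def IsAt (t : Unbounded A E F) (a : E → E) : Prop :=
  ∀ x : E, (a x, x) ∈ oneAddSet t.adjCompGraph

/-- `a⋆ = (1 + t t*)⁻¹` as an everywhere defined map. -/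
def IsAtStar (t : Unbounded A E F) (a : F → F) : Prop :=
  ∀ y : F, (a y, y) ∈ oneAddSet t.compAdjGraph

/-- `b = t ∘ a` as an everywhere defined map (where `a = (1 + t* t)⁻¹`, this is `b_t`). -/
def IsBt (t : Unbounded A E F) (a : E → E) (b : E → F) : Prop :=
  ∀ x : E, (a x, b x) ∈ t.graph

end Unbounded

namespace Adjointable

variable [Inner A E] [Inner A F]

/-- Self-adjointness of an adjointable operator. -/
def IsSelfAdj (a : Adjointable A E E) : Prop := a.adjFun = a.toFun

/-- Positivity of an adjointable operator: `⟪x, a x⟫ ≥ 0` for all `x`. -/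
def Nonneg [LE A] [Zero A] (a : Adjointable A E E) : Prop :=
  ∀ x : E, (0 : A) ≤ inner A x (a.toFun x)

/-- `r` is the positive square root of `a` in the C*-algebra `Adj(E)`. -/
def IsPosSqrtOf [LE A] [Zero A] (r a : Adjointable A E E) : Prop :=
  r.Nonneg ∧ r.adjFun = r.toFun ∧ ∀ x : E, r.toFun (r.toFun x) = a.toFun x

/-- The kernel of an adjointable operator is trivial. -/
def KerTrivial (a : Adjointable A E F) : Prop := ∀ x : E, a.toFun x = 0 → x = 0

end Adjointable

variable (A)

/-- The graph of the projection onto a submodule `G` (with domain `G ⊕ G^⊥`). -/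
def projSet [Zero A] [Inner A E] (G : Set E) : Set (E × E) :=
  {p | ∃ x ∈ G, ∃ y ∈ ortho A G, p = (x + y, x)}

/-- The restriction of a graph to those points whose first component lies in `D`. -/
def restrictSet (g : Set (E × F)) (D : Set E) : Set (E × F) := {p ∈ g | p.1 ∈ D}

end Operators

end CStarReg

/-- The Hilbert C*-module class as it stood in Mathlib of December 2024 (right `A`-action
via `Aᵐᵒᵖ`); Mathlib's current `CStarModule` uses a different action and axiom. -/
class CStarModuleOld (A E : Type*) [NonUnitalSemiring A] [StarRing A] [Module ℂ A]
    [AddCommGroup E] [Module ℂ E] [PartialOrder A] [SMul Aᵐᵒᵖ E] [Norm A] [Norm E]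
    extends Inner A E where
  inner_add_right {x} {y} {z} : inner x (y + z) = inner x y + inner x z
  inner_self_nonneg {x} : 0 ≤ inner x x
  inner_self {x} : inner x x = 0 ↔ x = 0
  inner_op_smul_right {a : A} {x y : E} : inner x (y <• a) = inner x y * a
  inner_smul_right_complex {z : ℂ} {x} {y} : inner x (z • y) = z • inner x y
  star_inner x y : star (inner x y) = inner y x
  norm_eq_sqrt_norm_inner_self x : ‖x‖ = √‖inner x x‖



set_option linter.unusedSectionVars false
set_option linter.unusedVariables false

section OrthoGeneric

open CStarReg

variable {A : Type*} [NonUnitalCStarAlgebra A] {V : Type*} [Inner A V]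

lemma ortho_anti {S T : Set V} (h : S ⊆ T) : ortho A T ⊆ ortho A S :=
  fun x hx y hy => hx y (h hy)

lemma subset_ortho_ortho (hstar : ∀ x y : V, star (inner A x y : A) = inner A y x)
    (S : Set V) : S ⊆ ortho A (ortho A S) := by
  intro y hy w hw
  rw [← hstar, hw y hy, star_zero]

lemma ortho_triple (hstar : ∀ x y : V, star (inner A x y : A) = inner A y x) (S : Set V) :
    ortho A (ortho A (ortho A S)) = ortho A S :=
  le_antisymm (ortho_anti (subset_ortho_ortho hstar S))
    (subset_ortho_ortho hstar (ortho A S))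

lemma neg_mem_ortho_iff [Neg V] (hneg : ∀ x y : V, (inner A (-x) y : A) = -inner A x y)
    {S : Set V} {x : V} : -x ∈ ortho A S ↔ x ∈ ortho A S := by
  constructor
  · intro h y hy
    have := h y hy
    rw [hneg, neg_eq_zero] at this
    exact this
  · intro h y hy
    rw [hneg, h y hy, neg_zero]

lemma zero_mem_ortho [Zero V] (hzero : ∀ y : V, (inner A (0 : V) y : A) = 0)
    (S : Set V) : (0 : V) ∈ ortho A S :=
  fun y _ => hzero y

lemma add_mem_ortho [Add V]
    (hadd : ∀ x y z : V, (inner A (x + y) z : A) = inner A x z + inner A y z)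
    {S : Set V} {x y : V} (hx : x ∈ ortho A S) (hy : y ∈ ortho A S) :
    x + y ∈ ortho A S := by
  intro z hz
  rw [hadd, hx z hz, hy z hz, add_zero]

end OrthoGeneric

namespace CStarModuleOld

variable {A : Type*} [NonUnitalCStarAlgebra A] [PartialOrder A] [StarOrderedRing A]
variable {E : Type*} [NormedAddCommGroup E] [Module ℂ E] [SMul Aᵐᵒᵖ E] [CStarModuleOld A E]

@[simp] lemma inner_zero_right {x : E} : inner A x (0 : E) = 0 := by
  have h := CStarModuleOld.inner_add_right (A := A) (x := x) (y := (0 : E)) (z := 0)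
  rw [add_zero] at h
  exact add_left_cancel (b := inner A x (0 : E)) (c := 0) (by rw [add_zero]; exact h.symm)

@[simp] lemma inner_zero_left {x : E} : inner A (0 : E) x = 0 := by
  rw [← CStarModuleOld.star_inner (A := A) x (0 : E), inner_zero_right, star_zero]

@[simp] lemma inner_add_left {x y z : E} : inner A (x + y) z = inner A x z + inner A y z := by
  rw [← CStarModuleOld.star_inner (A := A) z (x + y), CStarModuleOld.inner_add_right, star_add,
    CStarModuleOld.star_inner, CStarModuleOld.star_inner]

@[simp] lemma inner_neg_right {x y : E} : inner A x (-y) = -inner A x y := by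
  refine eq_neg_of_add_eq_zero_left ?_
  rw [← CStarModuleOld.inner_add_right, neg_add_cancel, inner_zero_right]

@[simp] lemma inner_neg_left {x y : E} : inner A (-x) y = -inner A x y := by
  rw [← CStarModuleOld.star_inner (A := A) y (-x), inner_neg_right, star_neg,
    CStarModuleOld.star_inner]

@[simp] lemma inner_smul_left_complex {z : ℂ} {x y : E} :
    inner A (z • x) y = star z • inner A x y := by
  rw [← CStarModuleOld.star_inner (A := A) y (z • x), CStarModuleOld.inner_smul_right_complex,
    star_smul, CStarModuleOld.star_inner]

@[simp] lemma inner_op_smul_left {a : A} {x y : E} :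
    inner A (x <• a) y = star a * inner A x y := by
  rw [← CStarModuleOld.star_inner (A := A) y (x <• a), CStarModuleOld.inner_op_smul_right,
    star_mul, CStarModuleOld.star_inner]

end CStarModuleOld

section Aux

open CStarReg CStarModuleOld

variable {A : Type*} [NonUnitalCStarAlgebra A] [PartialOrder A] [StarOrderedRing A]
variable {E : Type*} [NormedAddCommGroup E] [Module ℂ E] [SMul Aᵐᵒᵖ E] [CStarModuleOld A E]
variable {F : Type*} [NormedAddCommGroup F] [Module ℂ F] [SMul Aᵐᵒᵖ F] [CStarModuleOld A F]

@[simp] lemma prodInner_apply (p q : E × F) :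
    (inner A p q : A) = (inner A p.1 q.1 : A) + (inner A p.2 q.2 : A) := rfl

lemma prod_star_inner : ∀ p q : E × F, star (inner A p q : A) = inner A q p := by
  intro p q
  simp [CStarModuleOld.star_inner]

lemma prod_inner_neg_left : ∀ p q : E × F, (inner A (-p) q : A) = -inner A p q := by
  intro p q
  simp only [prodInner_apply, Prod.fst_neg, Prod.snd_neg, CStarModuleOld.inner_neg_left]
  abel

lemma prod_inner_zero_left : ∀ q : E × F, (inner A (0 : E × F) q : A) = 0 := by
  intro q
  simp [Prod.fst_zero, Prod.snd_zero]

lemma prod_inner_add_left : ∀ p q r : E × F, (inner A (p + q) r : A) = inner A p r + inner A q r := by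
  intro p q r
  simp only [prodInner_apply, Prod.fst_add, Prod.snd_add, CStarModuleOld.inner_add_left]
  abel

lemma mem_adjSet_iff {g : Set (E × F)} {q : F × E} :
    q ∈ adjSet A g ↔ (-q.2, q.1) ∈ ortho A g := by
  constructor
  · intro h p hp
    have h1 := h p hp
    have h2 : (inner A q.1 p.2 : A) = inner A q.2 p.1 := by
      rw [← CStarModuleOld.star_inner, h1, CStarModuleOld.star_inner]
    simp [h2]
  · intro h p hp
    have h1 := h p hp
    simp only [prodInner_apply, CStarModuleOld.inner_neg_left, neg_add_eq_zero] at h1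
    rw [← CStarModuleOld.star_inner q.1 p.2, ← CStarModuleOld.star_inner q.2 p.1, h1]

lemma ortho_adjSet (g : Set (E × F)) :
    ortho A (adjSet A g) = {w : F × E | (-w.2, w.1) ∈ ortho A (ortho A g)} := by
  ext w
  constructor
  · intro h p hp
    have hq : (p.2, -p.1) ∈ adjSet A g := by
      rw [mem_adjSet_iff]; simpa using hp
    have h2 := h _ hq
    simp only [prodInner_apply, CStarModuleOld.inner_neg_left,
      CStarModuleOld.inner_neg_right] at h2 ⊢
    rw [add_comm] at h2
    exact h2
  · intro h q hq
    rw [mem_adjSet_iff] at hq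
    have h2 := h _ hq
    simp only [prodInner_apply, CStarModuleOld.inner_neg_left,
      CStarModuleOld.inner_neg_right, neg_neg] at h2 ⊢
    rw [add_comm] at h2
    exact h2

lemma adjSet_adjSet (g : Set (E × F)) :
    adjSet A (adjSet A g) = ortho A (ortho A g) := by
  ext x
  rw [mem_adjSet_iff]
  constructor
  · intro h
    have h2 : ((-x.1 : E), (-x.2 : F)) ∈ ortho A (ortho A g) := by
      rw [ortho_adjSet] at h; simpa using h
    have h3 : -x ∈ ortho A (ortho A g) := h2
    exact (neg_mem_ortho_iff prod_inner_neg_left).mp h3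
  · intro h
    rw [ortho_adjSet]
    have h3 : -x ∈ ortho A (ortho A g) :=
      (neg_mem_ortho_iff prod_inner_neg_left).mpr h
    have h2 : ((-x.1 : E), (-x.2 : F)) ∈ ortho A (ortho A g) := h3
    simpa using h2

lemma adjSet_ortho_ortho (g : Set (E × F)) :
    adjSet A (ortho A (ortho A g)) = adjSet A g := by
  ext q
  rw [mem_adjSet_iff, mem_adjSet_iff, ortho_triple prod_star_inner]

lemma adjSet_triple (g : Set (E × F)) :
    adjSet A (adjSet A (adjSet A g)) = adjSet A g := by
  rw [adjSet_adjSet g, adjSet_ortho_ortho]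

/-- swap of a set of pairs -/
def swapSet (S : Set (E × F)) : Set (F × E) := {q | (q.2, q.1) ∈ S}

lemma ortho_swapSet (S : Set (E × F)) :
    ortho A (swapSet S) = swapSet (ortho A S) := by
  ext x
  constructor
  · intro h p hp
    have := h (p.2, p.1) hp
    simpa [add_comm] using this
  · intro h q hq
    have := h (q.2, q.1) hq
    simpa [add_comm] using this

lemma adjSet_swapSet (g : Set (E × F)) :
    adjSet A (swapSet g) = swapSet (adjSet A g) := by
  ext q
  constructor
  · intro h p hp
    exact (h (p.2, p.1) hp).symm
  · intro h p hp
    exact (h (p.2, p.1) hp).symm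

end Aux

section Statements

open CStarReg Unbounded

variable {A : Type*} [NonUnitalCStarAlgebra A] [PartialOrder A] [StarOrderedRing A]
variable {E : Type*} [NormedAddCommGroup E] [Module ℂ E] [SMul Aᵐᵒᵖ E] [CStarModuleOld A E]
  [CompleteSpace E]
variable {F : Type*} [NormedAddCommGroup F] [Module ℂ F] [SMul Aᵐᵒᵖ F] [CStarModuleOld A F]
  [CompleteSpace F]

/-- Properties of the biadjoint of an essentially defined, orthogonally
closable operator `t : E → F`. -/
theorem biadjoint_properties (t : CStarReg.Unbounded A E F) (ht : t.EssentiallyDefined)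
    (hadj : IsEssential A t.adjDom) :
    -- (a) `t ⊆ t**`, `t* = t***`, `Graph(t)^⊥⊥ = Graph(t**)`
    t.graph ⊆ adjSet A (adjSet A t.graph) ∧
    adjSet A (adjSet A (adjSet A t.graph)) = adjSet A t.graph ∧
    ortho A (ortho A t.graph) = adjSet A (adjSet A t.graph) ∧
    -- (b) `t = t**` iff `t` is orthogonally closed
    (t.graph = adjSet A (adjSet A t.graph) ↔ t.OrthoClosed) ∧
    -- (c) `Null(t**)` is orthogonally closed
    IsOrthoClosedSet A {x : E | (x, (0 : F)) ∈ adjSet A (adjSet A t.graph)} ∧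
    -- (d) inverses
    (IsEssential A t.ran → IsEssential A (Prod.snd '' adjSet A t.graph) →
      (∀ p ∈ t.graph, p.2 = 0 → p.1 = 0) ∧
      (∀ p ∈ adjSet A (adjSet A t.graph), p.2 = 0 → p.1 = 0) ∧
      IsEssential A (Prod.fst '' {q : F × E | (q.2, q.1) ∈ t.graph}) ∧
      (∃ s : CStarReg.Unbounded A F E,
        s.graph = ortho A (ortho A {q : F × E | (q.2, q.1) ∈ t.graph})) ∧
      {q : F × E | (q.2, q.1) ∈ adjSet A (adjSet A t.graph)} =
        adjSet A (adjSet A {q : F × E | (q.2, q.1) ∈ t.graph})) := by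
  set g := t.graph with hg
  have hinj2 : IsEssential A (Prod.snd '' adjSet A g) →
      ∀ p ∈ adjSet A (adjSet A g), p.2 = 0 → p.1 = 0 := by
    intro h2 p hp hp2
    have hmem : p.1 ∈ ortho A (Prod.snd '' adjSet A g) := by
      rintro y ⟨q, hq, rfl⟩
      have h3 := hp q hq
      rw [hp2, CStarModuleOld.inner_zero_right] at h3
      rw [← CStarModuleOld.star_inner q.2 p.1, h3, star_zero]
    unfold IsEssential at h2
    rw [h2] at hmem
    exact hmem
  refine ⟨?_, ?_, ?_, ?_, ?_, ?_⟩
  · rw [adjSet_adjSet]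
    exact subset_ortho_ortho prod_star_inner g
  · exact adjSet_triple g
  · exact (adjSet_adjSet g).symm
  · rw [adjSet_adjSet]
    unfold Unbounded.OrthoClosed
    exact eq_comm
  · have hS : {x : E | (x, (0 : F)) ∈ adjSet A (adjSet A g)} =
        ortho A (Prod.fst '' ortho A g) := by
      ext x
      rw [Set.mem_setOf_eq, adjSet_adjSet]
      constructor
      · rintro h y ⟨p, hp, rfl⟩
        have h3 := h p hp
        simpa using h3
      · intro h p hp
        have h3 := h p.1 ⟨p, hp, rfl⟩
        simpa using h3
    unfold IsOrthoClosedSet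
    rw [hS, ortho_triple CStarModuleOld.star_inner]
  · intro h1 h2
    have hinj2' := hinj2 h2
    refine ⟨?_, hinj2', ?_, ?_, ?_⟩
    · intro p hp hp2
      have hmem : p.1 ∈ ortho A (Prod.snd '' adjSet A g) := by
        rintro y ⟨q, hq, rfl⟩
        have h3 := hq p hp
        rw [hp2, CStarModuleOld.inner_zero_left] at h3
        exact h3.symm
      unfold IsEssential at h2
      rw [h2] at hmem
      exact hmem
    · have heq : Prod.fst '' {q : F × E | (q.2, q.1) ∈ g} = Prod.snd '' g := by
        ext y
        constructor
        · rintro ⟨q, hq, rfl⟩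
          exact ⟨(q.2, q.1), hq, rfl⟩
        · rintro ⟨p, hp, rfl⟩
          exact ⟨(p.2, p.1), hp, rfl⟩
      rw [heq]
      exact h1
    · have hkey : ortho A (ortho A {q : F × E | (q.2, q.1) ∈ g}) =
          swapSet (ortho A (ortho A g)) := by
        show ortho A (ortho A (swapSet g)) = _
        rw [ortho_swapSet, ortho_swapSet]
      refine ⟨⟨ortho A (ortho A {q : F × E | (q.2, q.1) ∈ g}), ?_, ?_, ?_, ?_, ?_⟩, rfl⟩
      · exact zero_mem_ortho prod_inner_zero_left _
      · intro p q hp hq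
        exact add_mem_ortho prod_inner_add_left hp hq
      · intro c p hp z hz
        have hz0 := hp z hz
        have hsm : (inner A (c • p) z : A) = star c • (inner A p z : A) := by
          simp only [prodInner_apply, Prod.smul_fst, Prod.smul_snd,
            CStarModuleOld.inner_smul_left_complex, smul_add]
        rw [hsm, hz0, smul_zero]
      · intro a p hp z hz
        have hz0 := hp z hz
        have hsm : (inner A ((p.1 <• a, p.2 <• a) : F × E) z : A) = star a * (inner A p z : A) := by
          simp only [prodInner_apply, CStarModuleOld.inner_op_smul_left, mul_add]
        rw [hsm, hz0, mul_zero]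
      · intro y hy
        rw [hkey] at hy
        have hy' : ((y : E), (0 : F)) ∈ ortho A (ortho A g) := hy
        rw [← adjSet_adjSet] at hy'
        exact hinj2' _ hy' rfl
    · show swapSet (adjSet A (adjSet A g)) = adjSet A (adjSet A (swapSet g))
      rw [adjSet_swapSet, adjSet_swapSet]


end Statements
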